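/- Assume for k = 1,2 that C₀⟨x⟩^{2(M_k+1)} − C₁ ≤ V_k(t,x) ≤ C₂⟨x⟩^{2(M_k+1)} (M_k ≥ 0, C₀ > 0), |∂_x^α V_k| ≤ C_α⟨x⟩^{2(M_k+1)} for |α| ≥ 1, |A_j^{(k)}| ≤ C⟨x⟩^{M_k+1−δ} for some δ > 0, and |∂_x^α A_j^{(k)}| ≤ C_α⟨x⟩^{M_k+1} for |α| ≥ 1, and that with M₀ = min(M₁,M₂), |W₁₂(t,x)| ≤ C⟨x⟩^{2(M₀+1)−δ} for some δ > 0 and |∂_x^α W₁₂(t,x)| ≤ C_α⟨x⟩^{2(M₀+1)} for |α| ≥ 1. Then there exist constants μ* ≥ 0 and C₀* > 0 such that μ* + Re h̃_s(t,z,ζ) ≥ C₀*(⟨ζ⟩² + Φ(z)²) for all (t,z,ζ) ∈ [0,T]×ℝ^{4d}×ℝ^{4d}. -/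

import Mathlib

open MeasureTheory Real Set

noncomputable section

namespace Schro

/-- `ℝ^d` with the Euclidean norm. -/
abbrev Ed (d : ℕ) : Type := EuclideanSpace ℝ (Fin d)

variable {ι : Type} [Fintype ι] [DecidableEq ι]

/-- The Japanese bracket `⟨x⟩ = (1+|x|²)^{1/2}`. -/
def jap (x : EuclideanSpace ℝ ι) : ℝ := Real.sqrt (1 + ‖x‖ ^ 2)

/-- Partial derivative in the `i`-th coordinate direction. -/
def pd {F : Type*} [NormedAddCommGroup F] [NormedSpace ℝ F]
    (i : ι) (f : EuclideanSpace ℝ ι → F) : EuclideanSpace ℝ ι → F :=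
  fun x => fderiv ℝ f x (EuclideanSpace.single i 1)

def pdIter {F : Type*} [NormedAddCommGroup F] [NormedSpace ℝ F]
    (i : ι) : ℕ → (EuclideanSpace ℝ ι → F) → (EuclideanSpace ℝ ι → F)
  | 0 => id
  | n+1 => fun f => pd i (pdIter i n f)

/-- Iterated partial derivative `∂_x^α` for a multi-index `α`. -/
def mpd {F : Type*} [NormedAddCommGroup F] [NormedSpace ℝ F]
    (α : ι → ℕ) (f : EuclideanSpace ℝ ι → F) : EuclideanSpace ℝ ι → F :=
  (Finset.univ : Finset ι).toList.foldr (fun i g => pdIter i (α i) g) f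

/-- The length `|α|` of a multi-index. -/
def mdeg (α : ι → ℕ) : ℕ := ∑ i, α i

/-- `ℝ^{4d}`, the configuration space of four particles. -/
abbrev E4 (d : ℕ) : Type := EuclideanSpace ℝ (Fin 4 × Fin d)

/-- The position `x^{(k)}` of the `k`-th particle. -/
def comp4 {d : ℕ} (k : Fin 4) (z : E4 d) : Ed d := WithLp.toLp 2 (fun j => z (k, j))

/-- The exponents `(M₁, M₂, M₃, M₄) = (M₁, M₂, 0, 0)`. -/
def Mk (M1 M2 : ℝ) : Fin 4 → ℝ := ![M1, M2, 0, 0]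

/-- The weight family of the 4-particle space `B'^a`: `⟨x^{(k)}⟩^{2a(M_k+1)}`. -/
def w4 (d : ℕ) (Ms : Fin 4 → ℝ) : ℕ → Fin 4 → E4 d → ℝ :=
  fun n k z => jap (comp4 k z) ^ (2*(n:ℝ)*(Ms k + 1))

/-- Formal transpose of the momentum operator of the `k`-th particle. -/
def PjT4 {d : ℕ} (A : ℝ → Ed d → Fin d → ℝ) (t : ℝ) (k : Fin 4) (j : Fin d)
    (ψ : E4 d → ℂ) : E4 d → ℂ :=
  fun z => Complex.I * pd (k, j) ψ z - (A t (comp4 k z) j : ℂ) * ψ z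

/-- Formal transpose of the 4-particle Hamiltonian (1.4). -/
def HT4 {d : ℕ} (m : Fin 4 → ℝ) (V : Fin 4 → ℝ → Ed d → ℝ)
    (A : Fin 4 → ℝ → Ed d → Fin d → ℝ) (W : Fin 4 → Fin 4 → ℝ → Ed d → ℝ)
    (t : ℝ) (ψ : E4 d → ℂ) : E4 d → ℂ :=
  fun z =>
    (∑ k, ((1/(2*m k) : ℂ) * (∑ j, PjT4 (A k) t k j (PjT4 (A k) t k j ψ) z)
        + (V k t (comp4 k z) : ℂ) * ψ z))
    + (∑ p : Fin 4 × Fin 4, if p.1 < p.2 then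
        (W p.1 p.2 t (comp4 p.1 z - comp4 p.2 z) : ℂ) * ψ z else 0)

/-- The single-particle symbol `h_k(t,x,ξ) = (1/2m_k)|ξ − A^{(k)}(t,x)|² + V_k(t,x)`. -/
def hk {d : ℕ} (m : ℝ) (V : ℝ → Ed d → ℝ) (A : ℝ → Ed d → Fin d → ℝ)
    (t : ℝ) (x ξ : Ed d) : ℝ :=
  (1/(2*m)) * (∑ j, (ξ j - A t x j)^2) + V t x

/-- `l_k(x,ξ) = (1/2m_k)|ξ|² + ⟨x⟩²`. -/
def lk {d : ℕ} (m : ℝ) (x ξ : Ed d) : ℝ := (1/(2*m)) * ‖ξ‖^2 + jap x ^ 2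

/-- The symbol `h̃(t,z,ζ)` of (5.3). -/
def htil {d : ℕ} (m : Fin 4 → ℝ) (V : Fin 4 → ℝ → Ed d → ℝ)
    (A : Fin 4 → ℝ → Ed d → Fin d → ℝ) (W12 : ℝ → Ed d → ℝ)
    (t : ℝ) (z ζ : E4 d) : ℝ :=
  hk (m 0) (V 0) (A 0) t (comp4 0 z) (comp4 0 ζ)
  + hk (m 1) (V 1) (A 1) t (comp4 1 z) (comp4 1 ζ)
  + W12 t (comp4 0 z - comp4 1 z)
  + lk (m 2) (comp4 2 z) (comp4 2 ζ) + lk (m 3) (comp4 3 z) (comp4 3 ζ)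

/-- The symbol `h̃_s = h̃ + i Σ_{k=1,2} (1/2m_k) ∇·A^{(k)}(t,x^{(k)})` of (5.5). -/
def htilS {d : ℕ} (m : Fin 4 → ℝ) (V : Fin 4 → ℝ → Ed d → ℝ)
    (A : Fin 4 → ℝ → Ed d → Fin d → ℝ) (W12 : ℝ → Ed d → ℝ)
    (t : ℝ) (z ζ : E4 d) : ℂ :=
  (htil m V A W12 t z ζ : ℝ) + Complex.I *
    (((1/(2*m 0)) * ∑ j, pd j (fun y => A 0 t y j) (comp4 0 z)
      + (1/(2*m 1)) * ∑ j, pd j (fun y => A 1 t y j) (comp4 1 z) : ℝ) : ℂ)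

/-- `Φ(z) = Σ_{k=1,2} ⟨x^{(k)}⟩^{M_k+1} + Σ_{k=3,4} ⟨x^{(k)}⟩` of (5.8). -/
def Phi {d : ℕ} (M1 M2 : ℝ) (z : E4 d) : ℝ :=
  jap (comp4 0 z) ^ (M1+1) + jap (comp4 1 z) ^ (M2+1)
  + jap (comp4 2 z) + jap (comp4 3 z)


omit [DecidableEq ι] in
lemma one_le_jap (x : EuclideanSpace ℝ ι) : 1 ≤ jap x := by
  rw [jap]
  calc (1:ℝ) = Real.sqrt 1 := by simp
    _ ≤ Real.sqrt (1 + ‖x‖^2) := Real.sqrt_le_sqrt (by nlinarith [sq_nonneg ‖x‖])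

omit [DecidableEq ι] in
lemma jap_nonneg (x : EuclideanSpace ℝ ι) : 0 ≤ jap x := le_trans zero_le_one (one_le_jap x)

omit [DecidableEq ι] in
lemma jap_sq (x : EuclideanSpace ℝ ι) : jap x ^ 2 = 1 + ‖x‖ ^ 2 :=
  Real.sq_sqrt (by positivity)

omit [DecidableEq ι] in
lemma norm_le_jap (x : EuclideanSpace ℝ ι) : ‖x‖ ≤ jap x := by
  rw [jap]
  calc ‖x‖ = Real.sqrt (‖x‖^2) := (Real.sqrt_sq (norm_nonneg x)).symm
    _ ≤ Real.sqrt (1 + ‖x‖^2) := Real.sqrt_le_sqrt (by nlinarith)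

omit [DecidableEq ι] in
lemma jap_rpow_mono (x : EuclideanSpace ℝ ι) {p q : ℝ} (h : p ≤ q) :
    jap x ^ p ≤ jap x ^ q :=
  Real.rpow_le_rpow_of_exponent_le (one_le_jap x) h

omit [DecidableEq ι] in
lemma jap_rpow_sq (x : EuclideanSpace ℝ ι) (r : ℝ) : (jap x ^ r)^2 = jap x ^ (2*r) := by
  have h : (0:ℝ) < jap x := lt_of_lt_of_le one_pos (one_le_jap x)
  rw [sq, ← Real.rpow_add h]
  congr 1
  ring

lemma interp {p q : ℝ} (hpq : p < q) (ε : ℝ) (hε : 0 < ε) :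
    ∃ C ≥ (0:ℝ), ∀ a : ℝ, 1 ≤ a → a ^ p ≤ ε * a ^ q + C := by
  set R : ℝ := max 1 (ε⁻¹ ^ (1/(q-p))) with hR
  have hR1 : 1 ≤ R := le_max_left _ _
  have hqp : 0 < q - p := by linarith
  refine ⟨R ^ |p|, Real.rpow_nonneg (by linarith) _, fun a ha => ?_⟩
  rcases le_or_gt a R with hca | hca
  · have h1 : a ^ p ≤ a ^ |p| := Real.rpow_le_rpow_of_exponent_le ha (le_abs_self p)
    have h2 : a ^ |p| ≤ R ^ |p| := Real.rpow_le_rpow (by linarith) hca (abs_nonneg p)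
    have h3 : 0 ≤ ε * a ^ q := by
      have := Real.rpow_nonneg (show (0:ℝ) ≤ a by linarith) q
      positivity
    linarith
  · have h1 : ε⁻¹ ≤ a ^ (q - p) := by
      have h2 : ε⁻¹ ^ (1/(q-p)) ≤ a := le_of_lt (lt_of_le_of_lt (le_max_right _ _) hca)
      calc ε⁻¹ = (ε⁻¹ ^ (1/(q-p))) ^ (q-p) := by
                  rw [← Real.rpow_mul (le_of_lt (inv_pos.mpr hε)), one_div,
                    inv_mul_cancel₀ (ne_of_gt hqp), Real.rpow_one]
           _ ≤ a ^ (q-p) := Real.rpow_le_rpow (Real.rpow_nonneg (by positivity) _) h2 (le_of_lt hqp)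
    have h4 : a ^ p * ε⁻¹ ≤ a ^ p * a ^ (q - p) :=
      mul_le_mul_of_nonneg_left h1 (Real.rpow_nonneg (by linarith) _)
    rw [← Real.rpow_add (by linarith : (0:ℝ) < a), show p + (q-p) = q by ring] at h4
    have h7 : a ^ p ≤ ε * a ^ q := by
      calc a^p = ε * (a^p * ε⁻¹) := by field_simp
        _ ≤ ε * a ^ q := mul_le_mul_of_nonneg_left h4 (le_of_lt hε)
    have h6 : 0 ≤ R ^ |p| := Real.rpow_nonneg (by linarith) _
    linarith

lemma jap_sub_le {d : ℕ} (x y : EuclideanSpace ℝ (Fin d)) :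
    jap (x - y) ≤ jap x + jap y := by
  have h1 : ‖x - y‖ ≤ ‖x‖ + ‖y‖ := norm_sub_le x y
  have h2 : jap (x-y) ^ 2 ≤ (jap x + jap y) ^ 2 := by
    rw [jap_sq]
    have e1 := jap_sq x; have e2 := jap_sq y
    nlinarith [norm_le_jap x, norm_le_jap y, norm_nonneg x, norm_nonneg y,
      norm_nonneg (x - y), mul_self_le_mul_self (norm_nonneg (x-y)) h1,
      mul_le_mul (norm_le_jap x) (norm_le_jap y) (norm_nonneg y) (jap_nonneg x)]
  calc jap (x-y) = Real.sqrt (jap (x-y)^2) := (Real.sqrt_sq (jap_nonneg _)).symm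
    _ ≤ Real.sqrt ((jap x + jap y)^2) := Real.sqrt_le_sqrt h2
    _ = jap x + jap y := Real.sqrt_sq (add_nonneg (jap_nonneg x) (jap_nonneg y))

lemma rpow_add_le' {a b p : ℝ} (ha : 1 ≤ a) (hb : 1 ≤ b) (hp : 0 ≤ p) :
    (a + b) ^ p ≤ 2 ^ p * (a ^ p + b ^ p) := by
  have h1 : a + b ≤ 2 * max a b := by
    rcases max_cases a b with ⟨h, h'⟩ | ⟨h, h'⟩ <;> rw [h] <;> linarith
  calc (a+b)^p ≤ (2 * max a b) ^ p :=
        Real.rpow_le_rpow (by linarith) h1 hp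
    _ = 2 ^ p * (max a b) ^ p := Real.mul_rpow (by norm_num) (by rcases max_cases a b with ⟨h,_⟩|⟨h,_⟩ <;> rw [h] <;> linarith)
    _ ≤ 2 ^ p * (a ^ p + b ^ p) := by
        apply mul_le_mul_of_nonneg_left _ (Real.rpow_nonneg (by norm_num) p)
        rcases max_cases a b with ⟨h,_⟩|⟨h,_⟩ <;> rw [h]
        · nlinarith [Real.rpow_nonneg (show (0:ℝ) ≤ b by linarith) p]
        · nlinarith [Real.rpow_nonneg (show (0:ℝ) ≤ a by linarith) p]

omit [DecidableEq ι] in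
lemma norm_sq_sum (ξ : EuclideanSpace ℝ ι) : ‖ξ‖^2 = ∑ i, ξ i ^ 2 := by
  rw [EuclideanSpace.norm_eq, Real.sq_sqrt (by positivity)]
  simp [Real.norm_eq_abs, sq_abs]

lemma kinetic_bound {d : ℕ} (ξ a : Fin d → ℝ) (B : ℝ) (hB : ∀ j, a j ^ 2 ≤ B) :
    (1/2) * (∑ j, ξ j ^ 2) - (d:ℝ) * B ≤ ∑ j, (ξ j - a j)^2 := by
  have h : ∀ j ∈ Finset.univ, ξ j ^2 / 2 - B ≤ (ξ j - a j)^2 := fun j _ => by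
    nlinarith [hB j, sq_nonneg (ξ j - 2 * a j)]
  have h2 := Finset.sum_le_sum h
  have e : ∑ j : Fin d, (ξ j ^2/2 - B) = (1/2) * (∑ j, ξ j^2) - (d:ℝ) * B := by
    rw [Finset.sum_sub_distrib, Finset.sum_const, Finset.card_univ, Fintype.card_fin,
      nsmul_eq_mul, ← Finset.sum_div]
    ring
  linarith [h2, e.symm.le, e.le]

lemma absorb (K C J P D : ℝ) (hK : 0 ≤ K) (hC : 0 < C) (hJ : 0 ≤ J)
    (h : P ≤ C/(4*(K+1)) * J + D) : K * P ≤ C/4 * J + K * D := by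
  have h2 : K / (4*(K+1)) ≤ 1/4 := by
    rw [div_le_div_iff₀ (by linarith) (by norm_num)]
    linarith
  have t1 : K * P ≤ K * (C/(4*(K+1)) * J + D) := mul_le_mul_of_nonneg_left h hK
  have t2 : K * (C/(4*(K+1)) * J + D) = (C * (K/(4*(K+1)))) * J + K*D := by ring
  have t3 : (C * (K/(4*(K+1)))) * J ≤ (C * (1/4)) * J :=
    mul_le_mul_of_nonneg_right (mul_le_mul_of_nonneg_left h2 (le_of_lt hC)) hJ
  have t4 : (C*(1/4))*J = C/4*J := by ring
  linarith


set_option maxHeartbeats 2000000 in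
/-- The lower bound (5.5-2) of Lemma 5.1:
`μ* + Re h̃_s(t,z,ζ) ≥ C₀*(⟨ζ⟩² + Φ(z)²)`. -/
theorem htilde_lower_bound
    (d : ℕ) (hd : 0 < d) (T : ℝ) (hT : 0 < T)
    (m : Fin 4 → ℝ) (hm : ∀ k, 0 < m k)
    (M1 M2 : ℝ) (hM1 : 0 ≤ M1) (hM2 : 0 ≤ M2)
    (V : Fin 4 → ℝ → Ed d → ℝ) (A : Fin 4 → ℝ → Ed d → Fin d → ℝ)
    (W12 : ℝ → Ed d → ℝ)
    (hgrow : ∀ k : Fin 4, (k:ℕ) < 2 → ∃ C0 > (0:ℝ), ∃ C1 ≥ (0:ℝ), ∃ C2 > (0:ℝ),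
      ∀ t ∈ Icc (0:ℝ) T, ∀ x,
      C0 * jap x ^ (2*(Mk M1 M2 k + 1)) - C1 ≤ V k t x ∧
      V k t x ≤ C2 * jap x ^ (2*(Mk M1 M2 k + 1)))
    (hdV : ∀ k : Fin 4, (k:ℕ) < 2 → ∀ α : Fin d → ℕ, 1 ≤ mdeg α →
      ∃ C : ℝ, ∀ t ∈ Icc (0:ℝ) T, ∀ x,
      |mpd α (V k t) x| ≤ C * jap x ^ (2*(Mk M1 M2 k + 1)))
    (hA : ∀ k : Fin 4, (k:ℕ) < 2 → ∃ δ > (0:ℝ), ∃ C : ℝ,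
      ∀ t ∈ Icc (0:ℝ) T, ∀ x j, |A k t x j| ≤ C * jap x ^ (Mk M1 M2 k + 1 - δ))
    (hdA : ∀ k : Fin 4, (k:ℕ) < 2 → ∀ α : Fin d → ℕ, 1 ≤ mdeg α →
      ∃ C : ℝ, ∀ t ∈ Icc (0:ℝ) T, ∀ x j,
      |mpd α (fun y => A k t y j) x| ≤ C * jap x ^ (Mk M1 M2 k + 1))
    (hW : ∃ δ > (0:ℝ), ∃ C : ℝ, ∀ t ∈ Icc (0:ℝ) T, ∀ x,
      |W12 t x| ≤ C * jap x ^ (2*(min M1 M2 + 1) - δ))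
    (hdW : ∀ α : Fin d → ℕ, 1 ≤ mdeg α → ∃ C : ℝ, ∀ t ∈ Icc (0:ℝ) T, ∀ x,
      |mpd α (W12 t) x| ≤ C * jap x ^ (2*(min M1 M2 + 1))) :
    ∃ μs ≥ (0:ℝ), ∃ C0s > (0:ℝ), ∀ t ∈ Icc (0:ℝ) T, ∀ z ζ : E4 d,
      C0s * (jap ζ ^ (2:ℝ) + Phi M1 M2 z ^ 2) ≤ μs + (htilS m V A W12 t z ζ).re := by
  have hm0 := hm 0
  have hm1 := hm 1
  have hm2 := hm 2
  have hm3 := hm 3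
  obtain ⟨C00, hC00, C10, hC10, C20, hC20, hV0⟩ := hgrow 0 (by decide)
  obtain ⟨C01, hC01, C11, hC11, C21, hC21, hV1⟩ := hgrow 1 (by decide)
  obtain ⟨δ0, hδ0, CA0, hA0b⟩ := hA 0 (by decide)
  obtain ⟨δ1, hδ1, CA1, hA1b⟩ := hA 1 (by decide)
  obtain ⟨δW, hδW, CW, hWb⟩ := hW
  simp only [Mk, Matrix.cons_val_zero] at hV0 hA0b
  simp only [Mk, Matrix.cons_val_one, Matrix.head_cons, Matrix.cons_val_zero] at hV1 hA1b
  set pA0 : ℝ := max (2*(M1+1-δ0)) 0 with hpA0def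
  set pA1 : ℝ := max (2*(M2+1-δ1)) 0 with hpA1def
  set pW : ℝ := max (2*(min M1 M2 + 1) - δW) 0 with hpWdef
  have hpA0 : pA0 < 2*(M1+1) := by rw [hpA0def]; exact max_lt (by linarith) (by linarith)
  have hpA1 : pA1 < 2*(M2+1) := by rw [hpA1def]; exact max_lt (by linarith) (by linarith)
  have hpW0 : pW < 2*(M1+1) := by
    rw [hpWdef]
    refine max_lt ?_ (by linarith)
    have := min_le_left M1 M2
    linarith
  have hpW1 : pW < 2*(M2+1) := by
    rw [hpWdef]
    refine max_lt ?_ (by linarith)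
    have := min_le_right M1 M2
    linarith
  have hpWnn : 0 ≤ pW := by rw [hpWdef]; exact le_max_right _ _
  have hc20 : (0:ℝ) < 1/(2*m 0) := div_pos one_pos (by linarith)
  have hc21 : (0:ℝ) < 1/(2*m 1) := div_pos one_pos (by linarith)
  have hKA0 : (0:ℝ) ≤ 1/(2*m 0) * ((d:ℝ) * (max CA0 0)^2) :=
    mul_nonneg (le_of_lt hc20) (by positivity)
  have hKA1 : (0:ℝ) ≤ 1/(2*m 1) * ((d:ℝ) * (max CA1 0)^2) :=
    mul_nonneg (le_of_lt hc21) (by positivity)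
  have hKW : (0:ℝ) ≤ (max CW 0) * (2:ℝ) ^ pW :=
    mul_nonneg (le_max_right _ _) (Real.rpow_nonneg (by norm_num) _)
  obtain ⟨DA0, hDA0, hIA0⟩ := interp hpA0 (C00/(4*((1/(2*m 0) * ((d:ℝ) * (max CA0 0)^2))+1)))
    (div_pos hC00 (by linarith))
  obtain ⟨DA1, hDA1, hIA1⟩ := interp hpA1 (C01/(4*((1/(2*m 1) * ((d:ℝ) * (max CA1 0)^2))+1)))
    (div_pos hC01 (by linarith))
  obtain ⟨DW0, hDW0, hIW0⟩ := interp hpW0 (C00/(4*(((max CW 0) * (2:ℝ)^pW)+1)))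
    (div_pos hC00 (by linarith))
  obtain ⟨DW1, hDW1, hIW1⟩ := interp hpW1 (C01/(4*(((max CW 0) * (2:ℝ)^pW)+1)))
    (div_pos hC01 (by linarith))
  set C0s : ℝ := min (min (1/(4*m 0)) (1/(4*m 1))) (min (min (1/(2*m 2)) (1/(2*m 3)))
    (min (min (C00/8) (C01/8)) (1/4))) with hC0sdef
  have hC0spos : 0 < C0s := by
    rw [hC0sdef]
    refine lt_min (lt_min ?_ ?_) (lt_min (lt_min ?_ ?_) (lt_min (lt_min ?_ ?_) ?_))
    · exact div_pos one_pos (by linarith)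
    · exact div_pos one_pos (by linarith)
    · exact div_pos one_pos (by linarith)
    · exact div_pos one_pos (by linarith)
    · exact div_pos hC00 (by norm_num)
    · exact div_pos hC01 (by norm_num)
    · norm_num
  have hP0 : 0 ≤ (1/(2*m 0) * ((d:ℝ) * (max CA0 0)^2)) * DA0 := mul_nonneg hKA0 hDA0
  have hP1 : 0 ≤ (1/(2*m 1) * ((d:ℝ) * (max CA1 0)^2)) * DA1 := mul_nonneg hKA1 hDA1
  have hP2 : 0 ≤ ((max CW 0) * (2:ℝ)^pW) * DW0 := mul_nonneg hKW hDW0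
  have hP3 : 0 ≤ ((max CW 0) * (2:ℝ)^pW) * DW1 := mul_nonneg hKW hDW1
  refine ⟨C0s + C10 + C11 + (1/(2*m 0) * ((d:ℝ) * (max CA0 0)^2)) * DA0
    + (1/(2*m 1) * ((d:ℝ) * (max CA1 0)^2)) * DA1
    + ((max CW 0) * (2:ℝ)^pW) * DW0 + ((max CW 0) * (2:ℝ)^pW) * DW1,
    by linarith only [hC0spos, hC10, hC11, hP0, hP1, hP2, hP3], C0s, hC0spos, ?_⟩
  intro t ht z ζ
  have hre : (htilS m V A W12 t z ζ).re = htil m V A W12 t z ζ := by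
    simp [htilS]
  rw [hre]
  have hA0sq : ∀ j, (A 0 t (comp4 0 z) j)^2 ≤ (max CA0 0)^2 * jap (comp4 0 z) ^ pA0 := by
    intro j
    have h := hA0b t ht (comp4 0 z) j
    have h2 : |A 0 t (comp4 0 z) j| ≤ max CA0 0 * jap (comp4 0 z) ^ (M1+1-δ0) :=
      le_trans h (mul_le_mul_of_nonneg_right (le_max_left _ _) (Real.rpow_nonneg (jap_nonneg _) _))
    have h3 : (A 0 t (comp4 0 z) j)^2 ≤ (max CA0 0 * jap (comp4 0 z) ^ (M1+1-δ0))^2 := by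
      rw [← sq_abs]
      exact pow_le_pow_left₀ (abs_nonneg _) h2 2
    have h4 : (max CA0 0 * jap (comp4 0 z) ^ (M1+1-δ0))^2
        = (max CA0 0)^2 * jap (comp4 0 z) ^ (2*(M1+1-δ0)) := by
      rw [mul_pow, jap_rpow_sq]
    have h5 : jap (comp4 0 z) ^ (2*(M1+1-δ0)) ≤ jap (comp4 0 z) ^ pA0 :=
      jap_rpow_mono _ (by rw [hpA0def]; exact le_max_left _ _)
    calc (A 0 t (comp4 0 z) j)^2 ≤ (max CA0 0)^2 * jap (comp4 0 z) ^ (2*(M1+1-δ0)) := by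
          rw [← h4]; exact h3
      _ ≤ (max CA0 0)^2 * jap (comp4 0 z) ^ pA0 :=
          mul_le_mul_of_nonneg_left h5 (by positivity)
  have hA1sq : ∀ j, (A 1 t (comp4 1 z) j)^2 ≤ (max CA1 0)^2 * jap (comp4 1 z) ^ pA1 := by
    intro j
    have h := hA1b t ht (comp4 1 z) j
    have h2 : |A 1 t (comp4 1 z) j| ≤ max CA1 0 * jap (comp4 1 z) ^ (M2+1-δ1) :=
      le_trans h (mul_le_mul_of_nonneg_right (le_max_left _ _) (Real.rpow_nonneg (jap_nonneg _) _))
    have h3 : (A 1 t (comp4 1 z) j)^2 ≤ (max CA1 0 * jap (comp4 1 z) ^ (M2+1-δ1))^2 := by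
      rw [← sq_abs]
      exact pow_le_pow_left₀ (abs_nonneg _) h2 2
    have h4 : (max CA1 0 * jap (comp4 1 z) ^ (M2+1-δ1))^2
        = (max CA1 0)^2 * jap (comp4 1 z) ^ (2*(M2+1-δ1)) := by
      rw [mul_pow, jap_rpow_sq]
    have h5 : jap (comp4 1 z) ^ (2*(M2+1-δ1)) ≤ jap (comp4 1 z) ^ pA1 :=
      jap_rpow_mono _ (by rw [hpA1def]; exact le_max_left _ _)
    calc (A 1 t (comp4 1 z) j)^2 ≤ (max CA1 0)^2 * jap (comp4 1 z) ^ (2*(M2+1-δ1)) := by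
          rw [← h4]; exact h3
      _ ≤ (max CA1 0)^2 * jap (comp4 1 z) ^ pA1 :=
          mul_le_mul_of_nonneg_left h5 (by positivity)
  have hkin0 : 1/(2*m 0) * ((1/2) * (∑ j, comp4 0 ζ j ^2)
        - (d:ℝ) * ((max CA0 0)^2 * jap (comp4 0 z) ^ pA0))
      ≤ 1/(2*m 0) * ∑ j, (comp4 0 ζ j - A 0 t (comp4 0 z) j)^2 :=
    mul_le_mul_of_nonneg_left (kinetic_bound _ _ _ hA0sq) (le_of_lt hc20)
  have hkin0' : 1/(4*m 0) * (∑ j, comp4 0 ζ j ^2)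
      - (1/(2*m 0) * ((d:ℝ) * (max CA0 0)^2)) * jap (comp4 0 z) ^ pA0
      ≤ 1/(2*m 0) * ∑ j, (comp4 0 ζ j - A 0 t (comp4 0 z) j)^2 := by
    have hne : m 0 ≠ 0 := ne_of_gt hm0
    have e : 1/(2*m 0) * ((1/2) * (∑ j, comp4 0 ζ j ^2)
        - (d:ℝ) * ((max CA0 0)^2 * jap (comp4 0 z) ^ pA0))
        = 1/(4*m 0) * (∑ j, comp4 0 ζ j ^2)
          - (1/(2*m 0) * ((d:ℝ) * (max CA0 0)^2)) * jap (comp4 0 z) ^ pA0 := by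
      field_simp
      ring
    linarith only [hkin0, e]
  have hkin1 : 1/(2*m 1) * ((1/2) * (∑ j, comp4 1 ζ j ^2)
        - (d:ℝ) * ((max CA1 0)^2 * jap (comp4 1 z) ^ pA1))
      ≤ 1/(2*m 1) * ∑ j, (comp4 1 ζ j - A 1 t (comp4 1 z) j)^2 :=
    mul_le_mul_of_nonneg_left (kinetic_bound _ _ _ hA1sq) (le_of_lt hc21)
  have hkin1' : 1/(4*m 1) * (∑ j, comp4 1 ζ j ^2)
      - (1/(2*m 1) * ((d:ℝ) * (max CA1 0)^2)) * jap (comp4 1 z) ^ pA1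
      ≤ 1/(2*m 1) * ∑ j, (comp4 1 ζ j - A 1 t (comp4 1 z) j)^2 := by
    have hne : m 1 ≠ 0 := ne_of_gt hm1
    have e : 1/(2*m 1) * ((1/2) * (∑ j, comp4 1 ζ j ^2)
        - (d:ℝ) * ((max CA1 0)^2 * jap (comp4 1 z) ^ pA1))
        = 1/(4*m 1) * (∑ j, comp4 1 ζ j ^2)
          - (1/(2*m 1) * ((d:ℝ) * (max CA1 0)^2)) * jap (comp4 1 z) ^ pA1 := by
      field_simp
      ring
    linarith only [hkin1, e]
  have hVl0 := (hV0 t ht (comp4 0 z)).1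
  have hVl1 := (hV1 t ht (comp4 1 z)).1
  have habsW : |W12 t (comp4 0 z - comp4 1 z)|
      ≤ ((max CW 0) * (2:ℝ)^pW) * jap (comp4 0 z) ^ pW
        + ((max CW 0) * (2:ℝ)^pW) * jap (comp4 1 z) ^ pW := by
    have h := hWb t ht (comp4 0 z - comp4 1 z)
    have h1 : |W12 t (comp4 0 z - comp4 1 z)| ≤ max CW 0 * jap (comp4 0 z - comp4 1 z) ^ pW := by
      refine le_trans h (mul_le_mul (le_max_left _ _) (jap_rpow_mono _ ?_)
        (Real.rpow_nonneg (jap_nonneg _) _) (le_max_right _ _))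
      rw [hpWdef]
      exact le_max_left _ _
    have h2 : jap (comp4 0 z - comp4 1 z) ^ pW ≤ (jap (comp4 0 z) + jap (comp4 1 z)) ^ pW :=
      Real.rpow_le_rpow (jap_nonneg _) (jap_sub_le _ _) hpWnn
    have h3 : (jap (comp4 0 z) + jap (comp4 1 z)) ^ pW
        ≤ 2 ^ pW * (jap (comp4 0 z) ^ pW + jap (comp4 1 z) ^ pW) :=
      rpow_add_le' (one_le_jap _) (one_le_jap _) hpWnn
    calc |W12 t (comp4 0 z - comp4 1 z)| ≤ max CW 0 * jap (comp4 0 z - comp4 1 z) ^ pW := h1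
      _ ≤ max CW 0 * (2 ^ pW * (jap (comp4 0 z) ^ pW + jap (comp4 1 z) ^ pW)) :=
          mul_le_mul_of_nonneg_left (le_trans h2 h3) (le_max_right _ _)
      _ = _ := by ring
  have hWlow : -(((max CW 0) * (2:ℝ)^pW) * jap (comp4 0 z) ^ pW
        + ((max CW 0) * (2:ℝ)^pW) * jap (comp4 1 z) ^ pW)
      ≤ W12 t (comp4 0 z - comp4 1 z) := by
    have := neg_abs_le (W12 t (comp4 0 z - comp4 1 z))
    linarith only [this, habsW]
  have hab0 : (1/(2*m 0) * ((d:ℝ) * (max CA0 0)^2)) * jap (comp4 0 z) ^ pA0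
      ≤ C00/4 * jap (comp4 0 z) ^ (2*(M1+1)) + (1/(2*m 0) * ((d:ℝ) * (max CA0 0)^2)) * DA0 :=
    absorb _ _ _ _ _ hKA0 hC00 (Real.rpow_nonneg (jap_nonneg _) _) (hIA0 _ (one_le_jap _))
  have hab1 : (1/(2*m 1) * ((d:ℝ) * (max CA1 0)^2)) * jap (comp4 1 z) ^ pA1
      ≤ C01/4 * jap (comp4 1 z) ^ (2*(M2+1)) + (1/(2*m 1) * ((d:ℝ) * (max CA1 0)^2)) * DA1 :=
    absorb _ _ _ _ _ hKA1 hC01 (Real.rpow_nonneg (jap_nonneg _) _) (hIA1 _ (one_le_jap _))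
  have habW0 : ((max CW 0) * (2:ℝ)^pW) * jap (comp4 0 z) ^ pW
      ≤ C00/4 * jap (comp4 0 z) ^ (2*(M1+1)) + ((max CW 0) * (2:ℝ)^pW) * DW0 :=
    absorb _ _ _ _ _ hKW hC00 (Real.rpow_nonneg (jap_nonneg _) _) (hIW0 _ (one_le_jap _))
  have habW1 : ((max CW 0) * (2:ℝ)^pW) * jap (comp4 1 z) ^ pW
      ≤ C01/4 * jap (comp4 1 z) ^ (2*(M2+1)) + ((max CW 0) * (2:ℝ)^pW) * DW1 :=
    absorb _ _ _ _ _ hKW hC01 (Real.rpow_nonneg (jap_nonneg _) _) (hIW1 _ (one_le_jap _))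
  have hn2 : ‖comp4 2 ζ‖^2 = ∑ j, comp4 2 ζ j ^ 2 := norm_sq_sum _
  have hn3 : ‖comp4 3 ζ‖^2 = ∑ j, comp4 3 ζ j ^ 2 := norm_sq_sum _
  have hhtil : 1/(4*m 0) * (∑ j, comp4 0 ζ j ^2) + 1/(4*m 1) * (∑ j, comp4 1 ζ j ^2)
      + 1/(2*m 2) * (∑ j, comp4 2 ζ j ^2) + 1/(2*m 3) * (∑ j, comp4 3 ζ j ^2)
      + C00/2 * jap (comp4 0 z) ^ (2*(M1+1)) + C01/2 * jap (comp4 1 z) ^ (2*(M2+1))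
      + jap (comp4 2 z)^2 + jap (comp4 3 z)^2
      - (C10 + C11 + (1/(2*m 0) * ((d:ℝ) * (max CA0 0)^2)) * DA0
        + (1/(2*m 1) * ((d:ℝ) * (max CA1 0)^2)) * DA1
        + ((max CW 0) * (2:ℝ)^pW) * DW0 + ((max CW 0) * (2:ℝ)^pW) * DW1)
      ≤ htil m V A W12 t z ζ := by
    simp only [htil, hk, lk]
    rw [hn2, hn3]
    linarith only [hkin0', hkin1', hVl0, hVl1, hWlow, hab0, hab1, habW0, habW1]
  have hs0 : (0:ℝ) ≤ ∑ j, comp4 0 ζ j ^2 := Finset.sum_nonneg fun j _ => sq_nonneg _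
  have hs1 : (0:ℝ) ≤ ∑ j, comp4 1 ζ j ^2 := Finset.sum_nonneg fun j _ => sq_nonneg _
  have hs2 : (0:ℝ) ≤ ∑ j, comp4 2 ζ j ^2 := Finset.sum_nonneg fun j _ => sq_nonneg _
  have hs3 : (0:ℝ) ≤ ∑ j, comp4 3 ζ j ^2 := Finset.sum_nonneg fun j _ => sq_nonneg _
  have hg0 : (0:ℝ) ≤ jap (comp4 0 z) ^ (2*(M1+1)) := Real.rpow_nonneg (jap_nonneg _) _
  have hg1 : (0:ℝ) ≤ jap (comp4 1 z) ^ (2*(M2+1)) := Real.rpow_nonneg (jap_nonneg _) _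
  have hg2 : (0:ℝ) ≤ jap (comp4 2 z)^2 := sq_nonneg _
  have hg3 : (0:ℝ) ≤ jap (comp4 3 z)^2 := sq_nonneg _
  have hζeq : jap ζ ^ (2:ℝ) = 1 + ((∑ j, comp4 0 ζ j ^2) + (∑ j, comp4 1 ζ j ^2)
      + (∑ j, comp4 2 ζ j ^2) + (∑ j, comp4 3 ζ j ^2)) := by
    rw [show ((2:ℝ)) = ((2:ℕ):ℝ) by norm_num, Real.rpow_natCast, jap_sq, norm_sq_sum,
      Fintype.sum_prod_type, Fin.sum_univ_four]
    rfl
  have hφ : Phi M1 M2 z ^ 2 ≤ 4*(jap (comp4 0 z) ^ (2*(M1+1)) + jap (comp4 1 z) ^ (2*(M2+1))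
      + jap (comp4 2 z)^2 + jap (comp4 3 z)^2) := by
    have e0 := jap_rpow_sq (comp4 0 z) (M1+1)
    have e1 := jap_rpow_sq (comp4 1 z) (M2+1)
    simp only [Phi]
    nlinarith only [sq_nonneg (jap (comp4 0 z) ^ (M1+1) - jap (comp4 1 z) ^ (M2+1)),
      sq_nonneg (jap (comp4 0 z) ^ (M1+1) - jap (comp4 2 z)),
      sq_nonneg (jap (comp4 0 z) ^ (M1+1) - jap (comp4 3 z)),
      sq_nonneg (jap (comp4 1 z) ^ (M2+1) - jap (comp4 2 z)),
      sq_nonneg (jap (comp4 1 z) ^ (M2+1) - jap (comp4 3 z)),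
      sq_nonneg (jap (comp4 2 z) - jap (comp4 3 z)), e0, e1]
  have hc0 : C0s ≤ 1/(4*m 0) := by
    rw [hC0sdef]; exact le_trans (min_le_left _ _) (min_le_left _ _)
  have hc1 : C0s ≤ 1/(4*m 1) := by
    rw [hC0sdef]; exact le_trans (min_le_left _ _) (min_le_right _ _)
  have hc2 : C0s ≤ 1/(2*m 2) := by
    rw [hC0sdef]; exact le_trans (min_le_right _ _) (le_trans (min_le_left _ _) (min_le_left _ _))
  have hc3 : C0s ≤ 1/(2*m 3) := by
    rw [hC0sdef]; exact le_trans (min_le_right _ _) (le_trans (min_le_left _ _) (min_le_right _ _))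
  have hc4 : C0s ≤ C00/8 := by
    rw [hC0sdef]
    exact le_trans (min_le_right _ _) (le_trans (min_le_right _ _)
      (le_trans (min_le_left _ _) (min_le_left _ _)))
  have hc5 : C0s ≤ C01/8 := by
    rw [hC0sdef]
    exact le_trans (min_le_right _ _) (le_trans (min_le_right _ _)
      (le_trans (min_le_left _ _) (min_le_right _ _)))
  have hc6 : C0s ≤ 1/4 := by
    rw [hC0sdef]
    exact le_trans (min_le_right _ _) (le_trans (min_le_right _ _) (min_le_right _ _))
  have hq0' : C0s * (∑ j, comp4 0 ζ j ^2) ≤ 1/(4*m 0) * (∑ j, comp4 0 ζ j ^2) :=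
    mul_le_mul_of_nonneg_right hc0 hs0
  have hq1' : C0s * (∑ j, comp4 1 ζ j ^2) ≤ 1/(4*m 1) * (∑ j, comp4 1 ζ j ^2) :=
    mul_le_mul_of_nonneg_right hc1 hs1
  have hq2' : C0s * (∑ j, comp4 2 ζ j ^2) ≤ 1/(2*m 2) * (∑ j, comp4 2 ζ j ^2) :=
    mul_le_mul_of_nonneg_right hc2 hs2
  have hq3' : C0s * (∑ j, comp4 3 ζ j ^2) ≤ 1/(2*m 3) * (∑ j, comp4 3 ζ j ^2) :=
    mul_le_mul_of_nonneg_right hc3 hs3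
  have hr0 : C0s * jap (comp4 0 z) ^ (2*(M1+1)) ≤ C00/8 * jap (comp4 0 z) ^ (2*(M1+1)) :=
    mul_le_mul_of_nonneg_right hc4 hg0
  have hr1 : C0s * jap (comp4 1 z) ^ (2*(M2+1)) ≤ C01/8 * jap (comp4 1 z) ^ (2*(M2+1)) :=
    mul_le_mul_of_nonneg_right hc5 hg1
  have hr2 : C0s * jap (comp4 2 z)^2 ≤ 1/4 * jap (comp4 2 z)^2 :=
    mul_le_mul_of_nonneg_right hc6 hg2
  have hr3 : C0s * jap (comp4 3 z)^2 ≤ 1/4 * jap (comp4 3 z)^2 :=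
    mul_le_mul_of_nonneg_right hc6 hg3
  have hfin : C0s * (jap ζ ^ (2:ℝ) + Phi M1 M2 z ^ 2)
      ≤ C0s * ((1 + ((∑ j, comp4 0 ζ j ^2) + (∑ j, comp4 1 ζ j ^2)
        + (∑ j, comp4 2 ζ j ^2) + (∑ j, comp4 3 ζ j ^2)))
        + 4*(jap (comp4 0 z) ^ (2*(M1+1)) + jap (comp4 1 z) ^ (2*(M2+1))
        + jap (comp4 2 z)^2 + jap (comp4 3 z)^2)) := by
    apply mul_le_mul_of_nonneg_left _ (le_of_lt hC0spos)
    rw [hζeq]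
    linarith only [hφ]
  refine le_trans hfin ?_
  linarith only [hq0', hq1', hq2', hq3', hr0, hr1, hr2, hr3, hhtil]


end Schro
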